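/- arXiv:2207.14583 — 2 statements merged into one kernel-verified Lean document; each statement's English description precedes it below -/
import Mathlib

section
/- For λ ≥ 0, μ > 0, p > 1, and x₊ > 0, the period integral T(x₊) := 4∫₀¹ ds / √(λ(1−s²) + (2μ/(p+1)) x₊^{p−1}(1−s^{p+1})) is well defined (the integrand is integrable) and is strictly decreasing as a function of x₊ on (0,∞). -/
open MeasureTheory intervalIntegral

/-- Integrability helper: for `c > 0`, the function
`s ↦ 1/√(lam(1-s²) + c(1-s^{p+1}))` is interval integrable on `[0,1]`. -/
lemma stmt9_integrable (lam c p : ℝ) (hlam : 0 ≤ lam) (hc : 0 < c) (hp : 1 < p) :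
    IntervalIntegrable
      (fun s : ℝ => 1 / Real.sqrt (lam * (1 - s ^ 2) +
        c * (1 - s ^ (p + 1))))
      volume 0 1 := by
  -- dominating function
  have hg : IntervalIntegrable
      (fun s : ℝ => (Real.sqrt c)⁻¹ * (1 - s) ^ (-(1/2) : ℝ)) volume 0 1 := by
    have h1 : IntervalIntegrable (fun s : ℝ => s ^ (-(1/2) : ℝ)) volume 0 1 :=
      intervalIntegrable_rpow' (by norm_num)
    have h2 := (h1.comp_sub_left 1).symm
    simpa using h2.const_mul (Real.sqrt c)⁻¹
  apply hg.mono_fun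
  · -- a.e. strong measurability
    apply Measurable.aestronglyMeasurable
    fun_prop
  · -- a.e. bound on uIoc 0 1 = Ioc 0 1
    rw [Set.uIoc_of_le (by norm_num : (0:ℝ) ≤ 1)]
    filter_upwards [ae_restrict_mem measurableSet_Ioc] with s hs
    obtain ⟨hs0, hs1⟩ := hs
    have hs1' : 0 ≤ 1 - s := by linarith
    have hle : s ^ (p + 1) ≤ s := by
      rcases eq_or_lt_of_le hs1 with h | h
      · simp [h, Real.one_rpow]
      · calc s ^ (p + 1) ≤ s ^ (1 : ℝ) :=
              Real.rpow_le_rpow_of_exponent_ge hs0 h.le (by linarith)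
          _ = s := Real.rpow_one s
    have hD : c * (1 - s) ≤ lam * (1 - s ^ 2) + c * (1 - s ^ (p + 1)) := by
      have h1 : 0 ≤ lam * (1 - s ^ 2) := mul_nonneg hlam (by nlinarith)
      nlinarith
    have hcs : 0 ≤ c * (1 - s) := mul_nonneg hc.le hs1'
    have hkey : 1 / Real.sqrt (lam * (1 - s ^ 2) + c * (1 - s ^ (p + 1)))
        ≤ 1 / Real.sqrt (c * (1 - s)) := by
      rcases eq_or_lt_of_le hs1' with h | h
      · have hs1e : s = 1 := by linarith
        have : lam * (1 - s ^ 2) + c * (1 - s ^ (p + 1)) = 0 := by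
          simp [hs1e, Real.one_rpow]
        simp [this, ← h]
      · have hpos : 0 < c * (1 - s) := mul_pos hc h
        apply one_div_le_one_div_of_le (Real.sqrt_pos.mpr hpos)
        exact Real.sqrt_le_sqrt hD
    have heq : 1 / Real.sqrt (c * (1 - s)) = (Real.sqrt c)⁻¹ * (1 - s) ^ (-(1/2) : ℝ) := by
      rw [Real.sqrt_mul hc.le, one_div, mul_inv,
        Real.rpow_neg hs1', ← Real.sqrt_eq_rpow]
    rw [Real.norm_eq_abs, Real.norm_eq_abs, abs_of_nonneg, abs_of_nonneg]
    · exact heq ▸ hkey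
    · exact mul_nonneg (inv_nonneg.mpr (Real.sqrt_nonneg c)) (Real.rpow_nonneg hs1' _)
    · positivity

/-- For `λ ≥ 0`, `μ > 0`, `p > 1`, the period integral
`T(x₊) = 4∫₀¹ ds/√(λ(1−s²) + (2μ/(p+1)) x₊^{p−1}(1−s^{p+1}))` is well defined
for every `x₊ > 0` and strictly decreasing in `x₊` on `(0,∞)`. -/
theorem stmt9 (lam μ p : ℝ) (hlam : 0 ≤ lam) (hμ : 0 < μ) (hp : 1 < p) :
    (∀ x : ℝ, 0 < x → IntervalIntegrable
      (fun s : ℝ => 1 / Real.sqrt (lam * (1 - s ^ 2) +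
        (2 * μ / (p + 1)) * x ^ (p - 1) * (1 - s ^ (p + 1))))
      volume 0 1) ∧
    StrictAntiOn (fun x : ℝ =>
      4 * ∫ s in (0:ℝ)..1, 1 / Real.sqrt (lam * (1 - s ^ 2) +
        (2 * μ / (p + 1)) * x ^ (p - 1) * (1 - s ^ (p + 1))))
      (Set.Ioi 0) := by
  have hc : ∀ x : ℝ, 0 < x → 0 < (2 * μ / (p + 1)) * x ^ (p - 1) := by
    intro x hx
    have h1 : 0 < 2 * μ / (p + 1) := by positivity
    exact mul_pos h1 (Real.rpow_pos_of_pos hx _)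
  have hint : ∀ x : ℝ, 0 < x → IntervalIntegrable
      (fun s : ℝ => 1 / Real.sqrt (lam * (1 - s ^ 2) +
        (2 * μ / (p + 1)) * x ^ (p - 1) * (1 - s ^ (p + 1))))
      volume 0 1 := fun x hx =>
    stmt9_integrable lam _ p hlam (hc x hx) hp
  refine ⟨hint, ?_⟩
  intro a ha b hb hab
  simp only [Set.mem_Ioi] at ha hb
  have hca := hc a ha
  have hcab : (2 * μ / (p + 1)) * a ^ (p - 1) < (2 * μ / (p + 1)) * b ^ (p - 1) := by
    have : a ^ (p - 1) < b ^ (p - 1) :=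
      Real.rpow_lt_rpow ha.le hab (by linarith)
    exact mul_lt_mul_of_pos_left this (by positivity)
  set ca := (2 * μ / (p + 1)) * a ^ (p - 1)
  set cb := (2 * μ / (p + 1)) * b ^ (p - 1)
  have hia := hint a ha
  have hib := hint b hb
  have hdiff : IntervalIntegrable
      (fun s : ℝ => 1 / Real.sqrt (lam * (1 - s ^ 2) + ca * (1 - s ^ (p + 1)))
        - 1 / Real.sqrt (lam * (1 - s ^ 2) + cb * (1 - s ^ (p + 1)))) volume 0 1 :=
    hia.sub hib
  have hpos : 0 < ∫ s in (0:ℝ)..1,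
      (1 / Real.sqrt (lam * (1 - s ^ 2) + ca * (1 - s ^ (p + 1)))
        - 1 / Real.sqrt (lam * (1 - s ^ 2) + cb * (1 - s ^ (p + 1)))) := by
    apply intervalIntegral.intervalIntegral_pos_of_pos_on hdiff _ (by norm_num)
    intro s hs
    obtain ⟨hs0, hs1⟩ := hs
    have hsp : s ^ (p + 1) < 1 := Real.rpow_lt_one hs0.le hs1 (by linarith)
    have h1 : 0 < 1 - s ^ (p + 1) := by linarith
    have h2 : 0 ≤ lam * (1 - s ^ 2) := mul_nonneg hlam (by nlinarith)
    have hDa : 0 < lam * (1 - s ^ 2) + ca * (1 - s ^ (p + 1)) := by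
      have := mul_pos hca h1; linarith
    have hDab : lam * (1 - s ^ 2) + ca * (1 - s ^ (p + 1))
        < lam * (1 - s ^ 2) + cb * (1 - s ^ (p + 1)) := by
      have := mul_lt_mul_of_pos_right hcab h1; linarith
    have hsq : Real.sqrt (lam * (1 - s ^ 2) + ca * (1 - s ^ (p + 1)))
        < Real.sqrt (lam * (1 - s ^ 2) + cb * (1 - s ^ (p + 1))) :=
      Real.sqrt_lt_sqrt hDa.le hDab
    have hsqa : 0 < Real.sqrt (lam * (1 - s ^ 2) + ca * (1 - s ^ (p + 1))) :=
      Real.sqrt_pos.mpr hDa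
    have : 1 / Real.sqrt (lam * (1 - s ^ 2) + cb * (1 - s ^ (p + 1)))
        < 1 / Real.sqrt (lam * (1 - s ^ 2) + ca * (1 - s ^ (p + 1))) :=
      one_div_lt_one_div_of_lt hsqa hsq
    linarith
  rw [intervalIntegral.integral_sub hia hib] at hpos
  simp only []
  nlinarith [hpos]
end

section
/- For λ ≥ 0, μ > 0, 0 < p < 1, and x₊ > 0, the period integral T(x₊) := 4∫₀¹ ds / √(λ(1−s²) + (2μ/(p+1)) x₊^{p−1}(1−s^{p+1})) is strictly increasing in x₊, and if λ > 0 then T(x₊) → 2π/√λ as x₊ → +∞ and T(x₊) → 0 as x₊ → 0⁺. -/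
open MeasureTheory intervalIntegral Filter Topology Real Set

noncomputable def itg (lam p c : ℝ) (s : ℝ) : ℝ :=
  1 / Real.sqrt (lam * (1 - s ^ 2) + c * (1 - s ^ (p + 1)))

lemma itg_meas (lam p c : ℝ) : Measurable (itg lam p c) := by
  unfold itg
  fun_prop

lemma hs_rpow {p s : ℝ} (hp0 : 0 ≤ p) (hs0 : 0 ≤ s) (hs1 : s ≤ 1) : s ^ (p + 1) ≤ s := by
  rcases eq_or_lt_of_le hs0 with h | h
  · rw [← h, Real.zero_rpow (by linarith)]
  · calc s ^ (p + 1) ≤ s ^ (1 : ℝ) :=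
        Real.rpow_le_rpow_of_exponent_ge h hs1 (by linarith)
    _ = s := Real.rpow_one s

lemma denom_le {lam p c s : ℝ} (hlam : 0 ≤ lam) (hp0 : 0 ≤ p) (hc : 0 ≤ c)
    (hs0 : 0 ≤ s) (hs1 : s ≤ 1) :
    c * (1 - s) ≤ lam * (1 - s ^ 2) + c * (1 - s ^ (p + 1)) := by
  have h1 : s ^ (p + 1) ≤ s := hs_rpow hp0 hs0 hs1
  nlinarith [mul_nonneg hlam (by nlinarith : (0:ℝ) ≤ 1 - s ^ 2),
    mul_le_mul_of_nonneg_left h1 hc]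

lemma itg_at_one (lam p c : ℝ) : itg lam p c 1 = 0 := by
  simp [itg, Real.one_rpow]

lemma itg_le {lam p c s : ℝ} (hlam : 0 ≤ lam) (hp0 : 0 ≤ p) (hc : 0 < c)
    (hs : s ∈ Icc (0:ℝ) 1) : itg lam p c s ≤ 1 / Real.sqrt (c * (1 - s)) := by
  rcases eq_or_lt_of_le hs.2 with h1 | h1
  · subst h1; simp [itg_at_one]
  · have hb : 0 < c * (1 - s) := mul_pos hc (by linarith)
    exact one_div_le_one_div_of_le (Real.sqrt_pos.2 hb)
      (Real.sqrt_le_sqrt (denom_le hlam hp0 hc.le hs.1 hs.2))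

lemma itg_le' {lam p c s : ℝ} (hlam : 0 < lam) (hp0 : 0 ≤ p) (hc : 0 ≤ c)
    (hs : s ∈ Icc (0:ℝ) 1) : itg lam p c s ≤ 1 / Real.sqrt (lam * (1 - s)) := by
  rcases eq_or_lt_of_le hs.2 with h1 | h1
  · subst h1; simp [itg_at_one]
  · have hb : 0 < lam * (1 - s) := mul_pos hlam (by linarith)
    have hsp : s ^ (p + 1) ≤ 1 := Real.rpow_le_one hs.1 hs.2 (by linarith)
    refine one_div_le_one_div_of_le (Real.sqrt_pos.2 hb) (Real.sqrt_le_sqrt ?_)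
    nlinarith [mul_nonneg hc (by linarith : (0:ℝ) ≤ 1 - s ^ (p + 1)),
      mul_nonneg hlam.le (mul_nonneg hs.1 (by linarith : (0:ℝ) ≤ 1 - s))]

lemma bound_intInt {c : ℝ} (hc : 0 < c) :
    IntervalIntegrable (fun s : ℝ => 1 / Real.sqrt (c * (1 - s))) volume 0 1 := by
  have h0 : IntervalIntegrable (fun u : ℝ => u ^ (-(1/2) : ℝ)) volume 0 1 :=
    intervalIntegrable_rpow' (by norm_num)
  have h1 : IntervalIntegrable (fun s : ℝ => (1 - s) ^ (-(1/2) : ℝ)) volume 0 1 := by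
    simpa using (h0.comp_sub_left 1).symm
  have h2 := h1.const_mul ((Real.sqrt c)⁻¹)
  rw [intervalIntegrable_iff_integrableOn_Ioc_of_le zero_le_one] at h2 ⊢
  refine h2.congr ?_
  filter_upwards [ae_restrict_mem measurableSet_Ioc] with s hs
  have h1s : (0:ℝ) ≤ 1 - s := by linarith [hs.2]
  rw [Real.sqrt_mul hc.le, Real.sqrt_eq_rpow (1 - s), Real.rpow_neg h1s]
  field_simp

lemma itg_intInt {lam p c : ℝ} (hlam : 0 ≤ lam) (hp0 : 0 ≤ p) (hc : 0 < c) :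
    IntervalIntegrable (itg lam p c) volume 0 1 := by
  have hb := bound_intInt hc
  rw [intervalIntegrable_iff_integrableOn_Ioc_of_le zero_le_one] at hb ⊢
  refine hb.mono' ((itg_meas lam p c).aestronglyMeasurable) ?_
  filter_upwards [ae_restrict_mem measurableSet_Ioc] with s hs
  rw [Real.norm_eq_abs, abs_of_nonneg (by unfold itg; positivity)]
  exact itg_le hlam hp0 hc ⟨hs.1.le, hs.2⟩

lemma itg_anti {lam p c₁ c₂ s : ℝ} (hlam : 0 ≤ lam) (hp0 : 0 ≤ p) (hc₂ : 0 < c₂)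
    (hcc : c₂ ≤ c₁) (hs : s ∈ Icc (0:ℝ) 1) : itg lam p c₁ s ≤ itg lam p c₂ s := by
  rcases eq_or_lt_of_le hs.2 with h1 | h1
  · subst h1; simp [itg_at_one]
  · have hsp : s ^ (p + 1) ≤ 1 := Real.rpow_le_one hs.1 hs.2 (by linarith)
    have hb : 0 < lam * (1 - s ^ 2) + c₂ * (1 - s ^ (p + 1)) :=
      lt_of_lt_of_le (mul_pos hc₂ (by linarith)) (denom_le hlam hp0 hc₂.le hs.1 hs.2)
    refine one_div_le_one_div_of_le (Real.sqrt_pos.2 hb) (Real.sqrt_le_sqrt ?_)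
    have := mul_le_mul_of_nonneg_right hcc (by linarith : (0:ℝ) ≤ 1 - s ^ (p + 1))
    linarith

lemma itg_strict_anti {lam p c₁ c₂ s : ℝ} (hlam : 0 ≤ lam) (hp0 : 0 ≤ p) (hc₂ : 0 < c₂)
    (hcc : c₂ < c₁) (hs : s ∈ Ioo (0:ℝ) 1) : itg lam p c₁ s < itg lam p c₂ s := by
  obtain ⟨hs0, hs1⟩ := hs
  have hs : s ∈ Ioo (0:ℝ) 1 := ⟨hs0, hs1⟩
  have hsp : s ^ (p + 1) < 1 := Real.rpow_lt_one hs.1.le hs.2 (by linarith)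
  have hb : 0 < lam * (1 - s ^ 2) + c₂ * (1 - s ^ (p + 1)) :=
    lt_of_lt_of_le (mul_pos hc₂ (by linarith)) (denom_le hlam hp0 hc₂.le hs.1.le hs.2.le)
  refine one_div_lt_one_div_of_lt (Real.sqrt_pos.2 hb) (Real.sqrt_lt_sqrt hb.le ?_)
  have := mul_lt_mul_of_pos_right hcc (by linarith : (0:ℝ) < 1 - s ^ (p + 1))
  linarith

lemma itg_integral_lt {lam p c₁ c₂ : ℝ} (hlam : 0 ≤ lam) (hp0 : 0 ≤ p) (hc₂ : 0 < c₂)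
    (hcc : c₂ < c₁) :
    (∫ s in (0:ℝ)..1, itg lam p c₁ s) < ∫ s in (0:ℝ)..1, itg lam p c₂ s := by
  have hc₁ : 0 < c₁ := lt_trans hc₂ hcc
  have hi₁ := itg_intInt hlam hp0 hc₁
  have hi₂ := itg_intInt hlam hp0 hc₂
  rw [intervalIntegrable_iff_integrableOn_Ioc_of_le zero_le_one] at hi₁ hi₂
  rw [intervalIntegral.integral_of_le zero_le_one, intervalIntegral.integral_of_le zero_le_one]
  rw [← sub_pos, ← MeasureTheory.integral_sub hi₂ hi₁]
  have hpos := (setIntegral_pos_iff_support_of_nonneg_ae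
    (f := fun s => itg lam p c₂ s - itg lam p c₁ s) ?_ (hi₂.sub hi₁)).2 ?_
  · exact hpos
  · filter_upwards [ae_restrict_mem measurableSet_Ioc] with s hs
    exact sub_nonneg.2 (itg_anti hlam hp0 hc₂ hcc.le ⟨hs.1.le, hs.2⟩)
  · have hsub : Ioo (0:ℝ) 1 ⊆
        (Function.support fun s => itg lam p c₂ s - itg lam p c₁ s) ∩ Ioc 0 1 := by
      intro s hs
      refine ⟨?_, Ioo_subset_Ioc_self hs⟩
      have := itg_strict_anti hlam hp0 hc₂ hcc hs
      simp only [Function.mem_support]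
      intro h
      rw [sub_eq_zero] at h
      exact absurd h (ne_of_gt (by linarith))
    refine lt_of_lt_of_le ?_ (measure_mono hsub)
    rw [Real.volume_Ioo]
    norm_num

lemma one_div_sqrt_one_sub_intInt :
    IntervalIntegrable (fun s : ℝ => 1 / Real.sqrt (1 - s)) volume 0 1 := by
  have := bound_intInt one_pos
  simpa using this

lemma itg_integral_le {lam p c : ℝ} (hlam : 0 ≤ lam) (hp0 : 0 ≤ p) (hc : 0 < c) :
    (∫ s in (0:ℝ)..1, itg lam p c s) ≤
      (Real.sqrt c)⁻¹ * ∫ s in (0:ℝ)..1, 1 / Real.sqrt (1 - s) := by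
  rw [← intervalIntegral.integral_const_mul]
  refine intervalIntegral.integral_mono_on zero_le_one (itg_intInt hlam hp0 hc)
    (one_div_sqrt_one_sub_intInt.const_mul _) (fun s hs => ?_)
  have h1 : (1:ℝ) / Real.sqrt (c * (1 - s)) = (Real.sqrt c)⁻¹ * (1 / Real.sqrt (1 - s)) := by
    rw [Real.sqrt_mul hc.le]
    ring
  rw [← h1]
  exact itg_le hlam hp0 hc hs

lemma one_div_sqrt_one_sub_sq_intInt :
    IntervalIntegrable (fun s : ℝ => 1 / Real.sqrt (1 - s ^ 2)) volume 0 1 := by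
  have hb := one_div_sqrt_one_sub_intInt
  rw [intervalIntegrable_iff_integrableOn_Ioc_of_le zero_le_one] at hb ⊢
  have hm : Measurable (fun s : ℝ => 1 / Real.sqrt (1 - s ^ 2)) := by fun_prop
  refine hb.mono' hm.aestronglyMeasurable ?_
  filter_upwards [ae_restrict_mem measurableSet_Ioc] with s hs
  rw [Real.norm_eq_abs, abs_of_nonneg (by positivity)]
  rcases eq_or_lt_of_le hs.2 with h1 | h1
  · subst h1; norm_num
  · refine one_div_le_one_div_of_le (Real.sqrt_pos.2 (by linarith)) (Real.sqrt_le_sqrt ?_)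
    nlinarith [hs.1]

lemma integral_one_div_sqrt_one_sub_sq :
    (∫ s in (0:ℝ)..1, 1 / Real.sqrt (1 - s ^ 2)) = π / 2 := by
  rw [intervalIntegral.integral_eq_sub_of_hasDeriv_right_of_le zero_le_one
    Real.continuous_arcsin.continuousOn
    (fun x hx => (Real.hasDerivAt_arcsin (by linarith [hx.1]) (ne_of_lt hx.2)).hasDerivWithinAt)
    one_div_sqrt_one_sub_sq_intInt]
  rw [Real.arcsin_one, Real.arcsin_zero, sub_zero]

lemma itg_tendsto_atTop {lam p K : ℝ} (hlam : 0 < lam) (hp0 : 0 < p) (hp1 : p < 1)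
    (hK : 0 < K) :
    Tendsto (fun x : ℝ => ∫ s in (0:ℝ)..1, itg lam p (K * x ^ (p - 1)) s) atTop
      (𝓝 ((Real.sqrt lam)⁻¹ * (π / 2))) := by
  have hc0 : Tendsto (fun x : ℝ => K * x ^ (p - 1)) atTop (𝓝 0) := by
    have h := (tendsto_rpow_neg_atTop (y := 1 - p) (by linarith)).const_mul K
    rw [mul_zero] at h
    simpa [neg_sub] using h
  have key := intervalIntegral.tendsto_integral_filter_of_dominated_convergence
    (μ := volume) (a := (0:ℝ)) (b := 1) (l := (atTop : Filter ℝ))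
    (F := fun x : ℝ => itg lam p (K * x ^ (p - 1)))
    (f := fun s : ℝ => 1 / Real.sqrt (lam * (1 - s ^ 2)))
    (bound := fun s : ℝ => 1 / Real.sqrt (lam * (1 - s)))
    (Eventually.of_forall fun x => (itg_meas _ _ _).aestronglyMeasurable)
    ?_ (bound_intInt hlam) ?_
  · have heq : (∫ s in (0:ℝ)..1, 1 / Real.sqrt (lam * (1 - s ^ 2)))
        = (Real.sqrt lam)⁻¹ * (π / 2) := by
      have h1 : ∀ s : ℝ, 1 / Real.sqrt (lam * (1 - s ^ 2))
          = (Real.sqrt lam)⁻¹ * (1 / Real.sqrt (1 - s ^ 2)) := fun s => by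
        rw [Real.sqrt_mul hlam.le]; ring
      simp_rw [h1]
      rw [intervalIntegral.integral_const_mul, integral_one_div_sqrt_one_sub_sq]
    rwa [heq] at key
  · filter_upwards [eventually_ge_atTop (0:ℝ)] with x hx
    refine ae_of_all _ fun s hs => ?_
    rw [Set.uIoc_of_le zero_le_one] at hs
    rw [Real.norm_eq_abs, abs_of_nonneg (by unfold itg; positivity)]
    exact itg_le' hlam hp0.le (mul_nonneg hK.le (Real.rpow_nonneg hx _)) ⟨hs.1.le, hs.2⟩
  · refine ae_of_all _ fun s hs => ?_
    rw [Set.uIoc_of_le zero_le_one] at hs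
    rcases eq_or_lt_of_le hs.2 with h1 | h1
    · subst h1
      simp only [itg_at_one]
      norm_num
    · have hA : 0 < lam * (1 - s ^ 2) := by
        have h2 : (0:ℝ) < 1 - s ^ 2 := by nlinarith [hs.1]
        exact mul_pos hlam h2
      have hcont : ContinuousAt
          (fun t : ℝ => 1 / Real.sqrt (lam * (1 - s ^ 2) + t * (1 - s ^ (p + 1)))) 0 := by
        have hsq : Continuous fun t : ℝ =>
            Real.sqrt (lam * (1 - s ^ 2) + t * (1 - s ^ (p + 1))) := by fun_prop
        refine ContinuousAt.div continuousAt_const hsq.continuousAt ?_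
        rw [zero_mul, add_zero]
        exact (Real.sqrt_pos.2 hA).ne'
      have := hcont.tendsto.comp hc0
      simpa [itg, Function.comp_def] using this

lemma itg_tendsto_zero {lam p K : ℝ} (hlam : 0 ≤ lam) (hp0 : 0 < p) (hp1 : p < 1)
    (hK : 0 < K) :
    Tendsto (fun x : ℝ => 4 * ∫ s in (0:ℝ)..1, itg lam p (K * x ^ (p - 1)) s)
      (𝓝[>] 0) (𝓝 0) := by
  set M : ℝ := ∫ s in (0:ℝ)..1, 1 / Real.sqrt (1 - s) with hM
  have hcx : Tendsto (fun x : ℝ => K * x ^ (p - 1)) (𝓝[>] 0) atTop := by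
    have key : Tendsto (fun x : ℝ => (x⁻¹) ^ (1 - p)) (𝓝[>] (0:ℝ)) atTop :=
      (tendsto_rpow_atTop (by linarith)).comp tendsto_inv_nhdsGT_zero
    have key2 : Tendsto (fun x : ℝ => x ^ (p - 1)) (𝓝[>] (0:ℝ)) atTop := by
      refine key.congr' ?_
      filter_upwards [self_mem_nhdsWithin] with x hx
      have hx' : (0:ℝ) < x := hx
      rw [Real.inv_rpow hx'.le, ← Real.rpow_neg hx'.le, neg_sub]
    exact key2.const_mul_atTop' hK
  have hsqrt : Tendsto (fun x : ℝ => Real.sqrt (K * x ^ (p - 1))) (𝓝[>] 0) atTop := by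
    have := (tendsto_rpow_atTop (by norm_num : (0:ℝ) < 1/2)).comp hcx
    refine this.congr fun x => ?_
    rw [Function.comp_apply, Real.sqrt_eq_rpow]
  have hinv : Tendsto (fun x : ℝ => (Real.sqrt (K * x ^ (p - 1)))⁻¹) (𝓝[>] 0) (𝓝 0) :=
    tendsto_inv_atTop_zero.comp hsqrt
  have hbnd : Tendsto (fun x : ℝ => 4 * ((Real.sqrt (K * x ^ (p - 1)))⁻¹ * M))
      (𝓝[>] 0) (𝓝 0) := by
    have := (hinv.mul_const M).const_mul 4
    simpa using this
  refine squeeze_zero' ?_ ?_ hbnd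
  · filter_upwards [self_mem_nhdsWithin] with x hx
    refine mul_nonneg (by norm_num) ?_
    refine intervalIntegral.integral_nonneg zero_le_one fun s _ => ?_
    unfold itg; positivity
  · filter_upwards [self_mem_nhdsWithin] with x hx
    have hc : 0 < K * x ^ (p - 1) := mul_pos hK (Real.rpow_pos_of_pos hx _)
    exact mul_le_mul_of_nonneg_left (itg_integral_le hlam hp0.le hc) (by norm_num)

/-- For `λ ≥ 0`, `μ > 0`, `0 < p < 1`, the period integral
`T(x₊) = 4∫₀¹ ds/√(λ(1−s²) + (2μ/(p+1)) x₊^{p−1}(1−s^{p+1}))` is strictly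
increasing in `x₊`, and if `λ > 0` then `T(x₊) → 2π/√λ` as `x₊ → ∞` and
`T(x₊) → 0` as `x₊ → 0⁺`. -/
theorem stmt10 (lam μ p : ℝ) (hlam : 0 ≤ lam) (hμ : 0 < μ)
    (hp0 : 0 < p) (hp1 : p < 1) :
    StrictMonoOn (fun x : ℝ =>
      4 * ∫ s in (0:ℝ)..1, 1 / Real.sqrt (lam * (1 - s ^ 2) +
        (2 * μ / (p + 1)) * x ^ (p - 1) * (1 - s ^ (p + 1))))
      (Set.Ioi 0) ∧
    (0 < lam →
      Tendsto (fun x : ℝ =>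
        4 * ∫ s in (0:ℝ)..1, 1 / Real.sqrt (lam * (1 - s ^ 2) +
          (2 * μ / (p + 1)) * x ^ (p - 1) * (1 - s ^ (p + 1))))
        atTop (𝓝 (2 * π / Real.sqrt lam)) ∧
      Tendsto (fun x : ℝ =>
        4 * ∫ s in (0:ℝ)..1, 1 / Real.sqrt (lam * (1 - s ^ 2) +
          (2 * μ / (p + 1)) * x ^ (p - 1) * (1 - s ^ (p + 1))))
        (𝓝[>] 0) (𝓝 0)) := by
  have hK : 0 < 2 * μ / (p + 1) := div_pos (by linarith) (by linarith)
  set K : ℝ := 2 * μ / (p + 1) with hKdef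
  refine ⟨?_, fun hlam' => ⟨?_, ?_⟩⟩
  · intro x hx y hy hxy
    have hx' : (0:ℝ) < x := hx
    have hy' : (0:ℝ) < y := hy
    have hcc : K * y ^ (p - 1) < K * x ^ (p - 1) :=
      mul_lt_mul_of_pos_left (Real.rpow_lt_rpow_of_neg hx' hxy (by linarith)) hK
    have hcy : 0 < K * y ^ (p - 1) := mul_pos hK (Real.rpow_pos_of_pos hy' _)
    have h := itg_integral_lt (lam := lam) (p := p) hlam hp0.le hcy hcc
    show 4 * (∫ s in (0:ℝ)..1, itg lam p (K * x ^ (p - 1)) s)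
        < 4 * (∫ s in (0:ℝ)..1, itg lam p (K * y ^ (p - 1)) s)
    linarith
  · have h := (itg_tendsto_atTop hlam' hp0 hp1 hK).const_mul 4
    have heq : 4 * ((Real.sqrt lam)⁻¹ * (π / 2)) = 2 * π / Real.sqrt lam := by
      rw [div_eq_mul_inv]; ring
    rw [heq] at h
    exact h
  · exact itg_tendsto_zero hlam hp0 hp1 hK
end
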